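/- The generalized down-up algebra L(g, p₁, p₂, p₃) is isomorphic to the quantum generalized Heisenberg algebra H_{p₂}(p₁t - p₃, -g), via a map matching generators d ↦ y, u ↦ x, t ↦ t. -/

import Mathlib

/- STATEMENT 11: the generalized down-up algebra L(g, p₁, p₂, p₃) (generators
t = ι 0, u = ι 1, d = ι 2 with relations dt = p₁td - p₃d, tu = p₁ut - p₃u,
du - p₂ud + g(t) = 0) is isomorphic to the quantum generalized Heisenberg algebra
H_{p₂}(p₁t - p₃, -g) via d ↦ y, u ↦ x, t ↦ t. -/

noncomputable section

open FreeAlgebra Polynomial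

variable (K : Type) [Field K]

/-- Relations of `H_q(f,g)`. t = ι 0, x = ι 1, y = ι 2. -/
inductive qghRel (q : K) (f g : Polynomial K) :
    FreeAlgebra K (Fin 3) → FreeAlgebra K (Fin 3) → Prop
  | r1 : qghRel q f g (ι K (0 : Fin 3) * ι K (1 : Fin 3))
      (ι K (1 : Fin 3) * Polynomial.aeval (ι K (0 : Fin 3)) f)
  | r2 : qghRel q f g (ι K (2 : Fin 3) * ι K (0 : Fin 3))
      (Polynomial.aeval (ι K (0 : Fin 3)) f * ι K (2 : Fin 3))
  | r3 : qghRel q f g (ι K (2 : Fin 3) * ι K (1 : Fin 3) - q • (ι K (1 : Fin 3) * ι K (2 : Fin 3)))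
      (Polynomial.aeval (ι K (0 : Fin 3)) g)

/-- The quantum generalized Heisenberg algebra `H_q(f,g)`. -/
abbrev QGH (q : K) (f g : Polynomial K) := RingQuot (qghRel K q f g)

/-- Generators of `H_q(f,g)`. -/
def qghGen (q : K) (f g : Polynomial K) (i : Fin 3) : QGH K q f g :=
  RingQuot.mkAlgHom K (qghRel K q f g) (ι K i)

/-- Relations of the generalized down-up algebra `L(g, p₁, p₂, p₃)`.
t = ι 0, u = ι 1, d = ι 2. -/
inductive duRel (g : Polynomial K) (p₁ p₂ p₃ : K) :
    FreeAlgebra K (Fin 3) → FreeAlgebra K (Fin 3) → Prop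
  | r1 : duRel g p₁ p₂ p₃ (ι K (2 : Fin 3) * ι K (0 : Fin 3))
      (p₁ • (ι K (0 : Fin 3) * ι K (2 : Fin 3)) - p₃ • ι K (2 : Fin 3))
  | r2 : duRel g p₁ p₂ p₃ (ι K (0 : Fin 3) * ι K (1 : Fin 3))
      (p₁ • (ι K (1 : Fin 3) * ι K (0 : Fin 3)) - p₃ • ι K (1 : Fin 3))
  | r3 : duRel g p₁ p₂ p₃
      (ι K (2 : Fin 3) * ι K (1 : Fin 3) - p₂ • (ι K (1 : Fin 3) * ι K (2 : Fin 3)) +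
        Polynomial.aeval (ι K (0 : Fin 3)) g)
      0

/-- The generalized down-up algebra `L(g, p₁, p₂, p₃)`. -/
abbrev DownUp (g : Polynomial K) (p₁ p₂ p₃ : K) := RingQuot (duRel K g p₁ p₂ p₃)

/-- Generators of `L(g, p₁, p₂, p₃)`. -/
def duGen (g : Polynomial K) (p₁ p₂ p₃ : K) (i : Fin 3) : DownUp K g p₁ p₂ p₃ :=
  RingQuot.mkAlgHom K (duRel K g p₁ p₂ p₃) (ι K i)

/-- `L(g, p₁, p₂, p₃) ≅ H_{p₂}(p₁t - p₃, -g)` via `d ↦ y, u ↦ x, t ↦ t`. -/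
-- helpers
lemma helper1 {A : Type} [Ring A] [Algebra K A] (p₁ p₃ : K) (a b : A) :
    (algebraMap K A p₁ * a - algebraMap K A p₃) * b = p₁ • (a * b) - p₃ • b := by
  simp [Algebra.smul_def, sub_mul, mul_assoc]

lemma helper2 {A : Type} [Ring A] [Algebra K A] (p₁ p₃ : K) (a b : A) :
    a * (algebraMap K A p₁ * b - algebraMap K A p₃) = p₁ • (a * b) - p₃ • a := by
  rw [mul_sub, ← mul_assoc, ← Algebra.commutes p₁ a, mul_assoc, ← Algebra.commutes p₃ a,
    Algebra.smul_def, Algebra.smul_def]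

lemma aeval_f {A : Type} [CommRing A] [Algebra K A] (p₁ p₃ : K) (a : A) :
    Polynomial.aeval a (C p₁ * X - C p₃) = algebraMap K A p₁ * a - algebraMap K A p₃ := by
  simp


theorem stmt11 (g : Polynomial K) (p₁ p₂ p₃ : K) :
    ∃ φ : DownUp K g p₁ p₂ p₃ ≃ₐ[K] QGH K p₂ (C p₁ * X - C p₃) (-g),
      φ (duGen K g p₁ p₂ p₃ 2) = qghGen K p₂ (C p₁ * X - C p₃) (-g) 2 ∧
      φ (duGen K g p₁ p₂ p₃ 1) = qghGen K p₂ (C p₁ * X - C p₃) (-g) 1 ∧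
      φ (duGen K g p₁ p₂ p₃ 0) = qghGen K p₂ (C p₁ * X - C p₃) (-g) 0 := by
  have key : ∀ {A : Type} [Ring A] [Algebra K A] (φ : FreeAlgebra K (Fin 3) →ₐ[K] A)
      (x : FreeAlgebra K (Fin 3)) (p : Polynomial K),
      φ (Polynomial.aeval x p) = Polynomial.aeval (φ x) p := by
    intro A _ _ φ x p
    exact (Polynomial.aeval_algHom_apply φ x p).symm
  have hfwd : ∀ a b, duRel K g p₁ p₂ p₃ a b →
      RingQuot.mkAlgHom K (qghRel K p₂ (C p₁ * X - C p₃) (-g)) a =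
      RingQuot.mkAlgHom K (qghRel K p₂ (C p₁ * X - C p₃) (-g)) b := by
    intro a b r
    induction r with
    | r1 =>
        have h := RingQuot.mkAlgHom_rel K
          (qghRel.r2 (K := K) (q := p₂) (f := C p₁ * X - C p₃) (g := -g))
        simp only [map_mul, map_sub, map_smul, key, aeval_C, aeval_X, AlgHom.commutes] at h ⊢
        rw [h, helper1]
    | r2 =>
        have h := RingQuot.mkAlgHom_rel K
          (qghRel.r1 (K := K) (q := p₂) (f := C p₁ * X - C p₃) (g := -g))
        simp only [map_mul, map_sub, map_smul, key, aeval_C, aeval_X, AlgHom.commutes] at h ⊢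
        rw [h, helper2]
    | r3 =>
        have h := RingQuot.mkAlgHom_rel K
          (qghRel.r3 (K := K) (q := p₂) (f := C p₁ * X - C p₃) (g := -g))
        simp only [map_mul, map_sub, map_smul, map_add, map_zero, key, map_neg] at h ⊢
        rw [h, neg_add_cancel]
  have hbwd : ∀ a b, qghRel K p₂ (C p₁ * X - C p₃) (-g) a b →
      RingQuot.mkAlgHom K (duRel K g p₁ p₂ p₃) a =
      RingQuot.mkAlgHom K (duRel K g p₁ p₂ p₃) b := by
    intro a b r
    induction r with
    | r1 =>
        have h := RingQuot.mkAlgHom_rel K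
          (duRel.r2 (K := K) (g := g) (p₁ := p₁) (p₂ := p₂) (p₃ := p₃))
        simp only [map_mul, map_sub, map_smul, key, aeval_C, aeval_X, AlgHom.commutes] at h ⊢
        rw [helper2, h]
    | r2 =>
        have h := RingQuot.mkAlgHom_rel K
          (duRel.r1 (K := K) (g := g) (p₁ := p₁) (p₂ := p₂) (p₃ := p₃))
        simp only [map_mul, map_sub, map_smul, key, aeval_C, aeval_X, AlgHom.commutes] at h ⊢
        rw [helper1, h]
    | r3 =>
        have h := RingQuot.mkAlgHom_rel K
          (duRel.r3 (K := K) (g := g) (p₁ := p₁) (p₂ := p₂) (p₃ := p₃))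
        simp only [map_mul, map_sub, map_smul, map_add, map_zero, key, map_neg] at h ⊢
        exact eq_neg_of_add_eq_zero_left h
  refine ⟨AlgEquiv.ofAlgHom
      (RingQuot.liftAlgHom K ⟨RingQuot.mkAlgHom K (qghRel K p₂ (C p₁ * X - C p₃) (-g)), hfwd⟩)
      (RingQuot.liftAlgHom K ⟨RingQuot.mkAlgHom K (duRel K g p₁ p₂ p₃), hbwd⟩) ?_ ?_, ?_, ?_, ?_⟩
  · apply RingQuot.ringQuot_ext'
    apply FreeAlgebra.hom_ext
    funext i
    simp [RingQuot.liftAlgHom_mkAlgHom_apply]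
  · apply RingQuot.ringQuot_ext'
    apply FreeAlgebra.hom_ext
    funext i
    simp [RingQuot.liftAlgHom_mkAlgHom_apply]
  all_goals
    simp [duGen, qghGen, RingQuot.liftAlgHom_mkAlgHom_apply, AlgEquiv.ofAlgHom_apply]

end
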